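/- Let s : ℕ → ℕ be defined by s(0) = 0 and s(N) = (N mod 3) + s(2·⌊N/3⌋) for N ≥ 1 (the sum-of-digits function of base 3/2). For every natural number N ≥ 1 and every base-1/2·3/2 representation ds of N with all digits at most 2, the sum of the entries of ds equals s(2N). That is, the sum-of-digits function of the base-1/2·3/2 representation of N equals the sum-of-digits function of the base-3/2 representation of 2N. -/

import Mathlib

/-- `ds` is a base-1/2·3/2 representation of the natural number `N`. -/
def IsAFSRep (N : ℕ) (ds : List ℕ) : Prop :=
  (∀ d ∈ ds, d ≤ 2) ∧
    (N : ℚ) = ∑ i ∈ Finset.range ds.length,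
      (ds.getD i 0 : ℚ) * (1 / 2 : ℚ) * (3 / 2 : ℚ) ^ i

/-- The sum-of-digits function of base 3/2. -/
def s : ℕ → ℕ
  | 0 => 0
  | (N + 1) => ((N + 1) % 3) + s (2 * ((N + 1) / 3))
decreasing_by omega

namespace AFSaux

noncomputable def val (ds : List ℕ) : ℚ :=
  ∑ i ∈ Finset.range ds.length, (ds.getD i 0 : ℚ) * (1 / 2 : ℚ) * (3 / 2 : ℚ) ^ i

lemma val_nil : val [] = 0 := by simp [val]

lemma val_cons (d : ℕ) (t : List ℕ) :
    val (d :: t) = (d : ℚ) * (1 / 2) + (3 / 2) * val t := by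
  unfold val
  rw [List.length_cons, Finset.sum_range_succ']
  simp only [List.getD_cons_succ, List.getD_cons_zero]
  rw [Finset.mul_sum, add_comm ((d:ℚ) * (1/2))]
  congr 1
  · apply Finset.sum_congr rfl
    intro i _
    ring
  · norm_num

def nv : List ℕ → ℕ
  | [] => 0
  | d :: t => d * 2 ^ t.length + 3 * nv t

lemma nv_eq (ds : List ℕ) : (nv ds : ℚ) = 2 ^ ds.length * val ds := by
  induction ds with
  | nil => simp [nv, val_nil]
  | cons d t ih =>
    rw [val_cons, List.length_cons]
    simp only [nv]
    push_cast
    rw [ih]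
    ring

lemma s_eq (n : ℕ) : s n = n % 3 + s (2 * (n / 3)) := by
  cases n with
  | zero => simp [s]
  | succ k => rw [s]

lemma key : ∀ ds : List ℕ, (∀ d ∈ ds, d ≤ 2) → ∀ n : ℕ,
    (n : ℚ) = 2 * val ds → ds.sum = s n := by
  intro ds
  induction ds with
  | nil =>
    intro _ n hn
    have : n = 0 := by exact_mod_cast (by simpa [val_nil] using hn : (n : ℚ) = 0)
    subst this
    simp [s]
  | cons d t ih =>
    intro hd n hn
    rw [val_cons] at hn
    have hL : (0 : ℕ) < 2 ^ t.length := pow_pos (by norm_num) _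
    have hq : (n : ℚ) * 2 ^ t.length = d * 2 ^ t.length + 3 * nv t := by
      rw [nv_eq, hn]; ring
    have hnat : n * 2 ^ t.length = d * 2 ^ t.length + 3 * nv t := by exact_mod_cast hq
    have hdn : d ≤ n := by
      have := Nat.le_of_mul_le_mul_right
        (by omega : d * 2 ^ t.length ≤ n * 2 ^ t.length) hL
      exact this
    have h3 : 3 ∣ (n - d) := by
      have hsub : (n - d) * 2 ^ t.length = 3 * nv t := by
        rw [Nat.sub_mul]; omega
      have hdvd : 3 ∣ (n - d) * 2 ^ t.length := ⟨nv t, hsub⟩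
      have hcop : Nat.Coprime 3 (2 ^ t.length) := by
        apply Nat.Coprime.pow_right
        decide
      exact hcop.dvd_of_dvd_mul_right hdvd
    have hm : ((2 * ((n - d) / 3) : ℕ) : ℚ) = 2 * val t := by
      have hval : val t = ((n : ℚ) - d) / 3 := by
        field_simp at hn ⊢
        linarith
      have hcast : (((n - d) / 3 : ℕ) : ℚ) = ((n : ℚ) - d) / 3 := by
        rw [Nat.cast_div h3 (by norm_num)]
        rw [Nat.cast_sub hdn]
        norm_num
      push_cast [hcast, hval]
      ring
    have ihs := ih (fun x hx => hd x (List.mem_cons_of_mem _ hx)) _ hm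
    have hd2 : d ≤ 2 := hd d (List.mem_cons_self)
    rw [s_eq n]
    have hmod : n % 3 = d := by omega
    have hdiv : n / 3 = (n - d) / 3 := by omega
    rw [hmod, hdiv, List.sum_cons, ihs]

end AFSaux

/-- For `N ≥ 1`, the digit sum of any base-1/2·3/2 representation of `N`
equals `s (2N)`, the base-3/2 sum of digits of `2N`. -/
theorem afs_sumDigits (N : ℕ) (hN : 1 ≤ N) (ds : List ℕ)
    (h : IsAFSRep N ds) : ds.sum = s (2 * N) := by
  obtain ⟨hd, hv⟩ := h
  apply AFSaux.key ds hd
  push_cast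
  rw [hv]
  rfl
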